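/- Let D be a nonempty finite set of points in the Euclidean plane, let B ⊆ ℝ² be a measurable region of finite Lebesgue measure, and for each t ∈ D let W(t) = V_D(t) ∩ B. Assume each W(t) has positive finite Lebesgue measure, and assume that the set of points q ∈ B admitting more than one nearest point in D has Lebesgue measure zero. For q having a unique nearest point in D, write t_q for that nearest point. Then for every weight function Q : D → ℝ, the integral over B of the function q ↦ Q(t_q)/vol(W(t_q)) equals Σ_{t∈D} Q(t). In particular (taking Q ≡ 1), the integral over B of q ↦ 1/vol(W(t_q)) equals |D|, so the estimator r = 1/p(t_q) with p(t) = vol(W(t))/vol(B) satisfies E[r] = |D| when q is drawn uniformly from B. -/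

import Mathlib

open MeasureTheory

/-- The Voronoi cell of `t` with respect to a finite set `D` of points in the plane. -/
def voronoiCell (D : Finset (EuclideanSpace ℝ (Fin 2))) (t : EuclideanSpace ℝ (Fin 2)) :
    Set (EuclideanSpace ℝ (Fin 2)) :=
  {q | ∀ t' ∈ D, dist q t ≤ dist q t'}

/-- Unbiasedness of the inverse-probability estimator (equation (1) of the paper):
if `nq q` denotes the nearest point of `D` to `q` (unique off a null set of ties),
and `W t = V_D(t) ∩ B`, then `∫_B Q(nq q) / vol(W (nq q)) dq = Σ_{t ∈ D} Q t`. -/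
theorem integral_inv_prob_estimator_eq_sum
    (D : Finset (EuclideanSpace ℝ (Fin 2))) (hDne : D.Nonempty)
    (B : Set (EuclideanSpace ℝ (Fin 2))) (hBmeas : MeasurableSet B)
    (hBfin : volume B < ⊤)
    (W : EuclideanSpace ℝ (Fin 2) → Set (EuclideanSpace ℝ (Fin 2)))
    (hW : ∀ t ∈ D, W t = voronoiCell D t ∩ B)
    (hWpos : ∀ t ∈ D, 0 < volume (W t)) (hWfin : ∀ t ∈ D, volume (W t) < ⊤)
    (hties : volume {q ∈ B | ∃ t₁ ∈ D, ∃ t₂ ∈ D, t₁ ≠ t₂ ∧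
      (∀ t' ∈ D, dist q t₁ ≤ dist q t') ∧ (∀ t' ∈ D, dist q t₂ ≤ dist q t')} = 0)
    (nq : EuclideanSpace ℝ (Fin 2) → EuclideanSpace ℝ (Fin 2))
    (hnq : ∀ q ∈ B, nq q ∈ D ∧ ∀ t' ∈ D, dist q (nq q) ≤ dist q t')
    (Q : EuclideanSpace ℝ (Fin 2) → ℝ) :
    ∫ q in B, Q (nq q) / (volume (W (nq q))).toReal = ∑ t ∈ D, Q t := by
  classical
  set T := {q ∈ B | ∃ t₁ ∈ D, ∃ t₂ ∈ D, t₁ ≠ t₂ ∧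
      (∀ t' ∈ D, dist q t₁ ≤ dist q t') ∧ (∀ t' ∈ D, dist q t₂ ≤ dist q t')} with hTdef
  have hcell : ∀ t, IsClosed (voronoiCell D t) := by
    intro t
    have : voronoiCell D t = ⋂ t' ∈ D, {q | dist q t ≤ dist q t'} := by
      ext q; simp [voronoiCell]
    rw [this]
    exact isClosed_biInter fun t' _ =>
      isClosed_le (Continuous.dist continuous_id continuous_const)
        (Continuous.dist continuous_id continuous_const)
  have hWmeas : ∀ t ∈ D, MeasurableSet (W t) := fun t ht => by
    rw [hW t ht]; exact (hcell t).measurableSet.inter hBmeas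
  have hTmeas : MeasurableSet T := by
    have hEq : T = B ∩ ⋃ t₁ ∈ D, ⋃ t₂ ∈ D, ⋃ _ : t₁ ≠ t₂,
        (voronoiCell D t₁ ∩ voronoiCell D t₂) := by
      ext q
      simp only [hTdef, Set.mem_setOf_eq, Set.mem_inter_iff, Set.mem_iUnion, voronoiCell]
      constructor
      · rintro ⟨hqB, t₁, h₁, t₂, h₂, hne, hc₁, hc₂⟩
        exact ⟨hqB, t₁, h₁, t₂, h₂, hne, hc₁, hc₂⟩
      · rintro ⟨hqB, t₁, h₁, t₂, h₂, hne, hc₁, hc₂⟩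
        exact ⟨hqB, t₁, h₁, t₂, h₂, hne, hc₁, hc₂⟩
    rw [hEq]
    exact hBmeas.inter <| D.measurableSet_biUnion fun t₁ _ =>
      D.measurableSet_biUnion fun t₂ _ =>
        MeasurableSet.iUnion fun _ =>
          (hcell t₁).measurableSet.inter (hcell t₂).measurableSet
  set f : EuclideanSpace ℝ (Fin 2) → ℝ := fun q => Q (nq q) / (volume (W (nq q))).toReal with hf
  have hconst : ∀ t ∈ D, ∀ q ∈ W t \ T, nq q = t := by
    intro t ht q hq
    obtain ⟨hqW, hqT⟩ := hq
    rw [hW t ht] at hqW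
    obtain ⟨hqc, hqB⟩ := hqW
    obtain ⟨hnqD, hnqle⟩ := hnq q hqB
    by_contra hne
    exact hqT ⟨hqB, nq q, hnqD, t, ht, hne, hnqle, hqc⟩
  have hWT : ∀ t ∈ D, volume (W t \ T) = volume (W t) := fun t ht =>
    measure_diff_null hties
  -- B \ T equals the disjoint union of the W t \ T
  have hcover : B \ T = ⋃ t ∈ D, (W t \ T) := by
    ext q
    constructor
    · rintro ⟨hqB, hqT⟩
      obtain ⟨hnqD, hnqle⟩ := hnq q hqB
      refine Set.mem_biUnion hnqD ⟨?_, hqT⟩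
      rw [hW _ hnqD]
      exact ⟨hnqle, hqB⟩
    · intro hq
      obtain ⟨t, ht, hqW, hqT⟩ := Set.mem_iUnion₂.mp hq
      rw [hW t ht] at hqW
      exact ⟨hqW.2, hqT⟩
  have hdisj : (D : Set _).Pairwise (Function.onFun Disjoint fun t => W t \ T) := by
    intro t₁ h₁ t₂ h₂ hne
    refine Set.disjoint_left.mpr fun q hq₁ hq₂ => ?_
    have e₁ := hconst t₁ h₁ q hq₁
    have e₂ := hconst t₂ h₂ q hq₂
    exact hne (e₁ ▸ e₂)
  have hBT : B =ᵐ[volume] (B \ T : Set _) := by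
    refine (MeasureTheory.ae_eq_set.mpr ⟨?_, ?_⟩).symm
    · exact measure_mono_null (fun q hq => (hq.2 hq.1.1).elim) measure_empty
    · exact measure_mono_null
        (fun q hq => by_contra fun h => hq.2 ⟨hq.1, h⟩) hties
  have step1 : ∫ q in B, f q = ∫ q in B \ T, f q :=
    setIntegral_congr_set hBT
  have hWint : ∀ t ∈ D, IntegrableOn f (W t \ T) := by
    intro t ht
    have : IntegrableOn (fun _ => Q t / (volume (W t)).toReal) (W t \ T) := by
      apply (integrableOn_const_iff (hC := enorm_ne_top)).mpr
      right
      exact lt_of_le_of_lt (measure_mono Set.diff_subset) (hWfin t ht)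
    exact this.congr_fun (fun q hq => by rw [hf]; simp [hconst t ht q hq])
      ((hWmeas t ht).diff hTmeas)
  have step2 : ∫ q in ⋃ t ∈ D, (W t \ T), f q = ∑ t ∈ D, ∫ q in W t \ T, f q :=
    integral_biUnion_finset D (fun t ht => (hWmeas t ht).diff hTmeas) hdisj hWint
  have step3 : ∀ t ∈ D, ∫ q in W t \ T, f q = Q t := by
    intro t ht
    have h1 : ∫ q in W t \ T, f q = ∫ q in W t \ T, Q t / (volume (W t)).toReal := by
      apply setIntegral_congr_fun ((hWmeas t ht).diff hTmeas)
      intro q hq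
      rw [hf]; simp [hconst t ht q hq]
    rw [h1, setIntegral_const, measureReal_def, hWT t ht, smul_eq_mul]
    have hne : (volume (W t)).toReal ≠ 0 :=
      ENNReal.toReal_ne_zero.mpr ⟨(hWpos t ht).ne', (hWfin t ht).ne⟩
    field_simp
  rw [show (∫ q in B, Q (nq q) / (volume (W (nq q))).toReal) = ∫ q in B, f q from rfl,
    step1, hcover, step2]
  exact Finset.sum_congr rfl step3
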